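/- Any Boolean function f : (ℤ_q)^n → {−1,1} of degree at most 1 (i.e., f̂(u) = 0 whenever |u| ≥ 2) has at most one relevant variable. -/

import Mathlib

open Finset BigOperators
open scoped Classical

/-- The character `χ_u(x) = ω^{⟨u,x⟩}` on `(ℤ_q)^n`, with `ω = e^{2πi/q}`. -/
noncomputable def chi (q n : ℕ) (u x : Fin n → ZMod q) : ℂ :=
  Complex.exp (2 * Real.pi * Complex.I * (((∑ i, u i * x i).val : ℕ) : ℂ) / q)

/-- Fourier coefficient `f̂(u) = q^{-n} Σ_x f(x) conj(χ_u(x))`. -/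
noncomputable def fhat (q n : ℕ) [NeZero q] (f : (Fin n → ZMod q) → ℂ)
    (u : Fin n → ZMod q) : ℂ :=
  (1 / (q : ℂ) ^ n) * ∑ x, f x * (starRingEnd ℂ) (chi q n u x)

/-- Adjacency operator of the Hamming graph `H(n,q)`. -/
noncomputable def adjOp (q n : ℕ) [NeZero q] (f : (Fin n → ZMod q) → ℂ)
    (x : Fin n → ZMod q) : ℂ :=
  ∑ y ∈ univ.filter (fun y => hammingDist x y = 1), f y

/-- Twice the number of edges `{x,y}` of `H(n,q)` with `f x ≠ f y`
(the number of ordered such pairs). -/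
noncomputable def nuOrd (q n : ℕ) [NeZero q] {α : Type*} (f : (Fin n → ZMod q) → α) : ℕ :=
  (univ.filter (fun p : (Fin n → ZMod q) × (Fin n → ZMod q) =>
    hammingDist p.1 p.2 = 1 ∧ f p.1 ≠ f p.2)).card

/-- Coordinate `i` is relevant for `f`. -/
def Relevant {q n : ℕ} {α : Type*} (f : (Fin n → ZMod q) → α) (i : Fin n) : Prop :=
  ∃ x y : Fin n → ZMod q, (∀ j, j ≠ i → x j = y j) ∧ f x ≠ f y

/-- The function `f_{i,a,b}` on `(ℤ_q)^n` obtained from `f` on `(ℤ_q)^{n+1}`. -/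
noncomputable def restrictDiff {q n : ℕ} (f : (Fin (n + 1) → ZMod q) → ℂ)
    (i : Fin (n + 1)) (a b : ZMod q) : (Fin n → ZMod q) → ℂ :=
  fun y => f (i.insertNth a y) - f (i.insertNth b y)

/-- The size of the support of `g`. -/
noncomputable def suppCard (q n : ℕ) [NeZero q] (g : (Fin n → ZMod q) → ℂ) : ℕ :=
  (univ.filter (fun y => g y ≠ 0)).card


set_option linter.unusedSectionVars false

noncomputable def ee (q : ℕ) (k : ZMod q) : ℂ :=
  Complex.exp (2 * Real.pi * Complex.I * (k.val : ℂ) / q)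

section Aux
variable (q : ℕ) [NeZero q]

lemma ee_int (m : ℤ) : ee q ((m : ZMod q)) = Complex.exp (2 * Real.pi * Complex.I * m / q) := by
  have hq : (q : ℂ) ≠ 0 := Nat.cast_ne_zero.mpr (NeZero.ne q)
  unfold ee
  have hv : ((((m : ZMod q)).val : ℤ) : ℂ) = ((m % q : ℤ) : ℂ) := by
    exact_mod_cast congrArg (Int.cast : ℤ → ℂ) (ZMod.val_intCast m)
  have : (m : ℂ) = ((m % q : ℤ) : ℂ) + q * ((m / q : ℤ) : ℂ) := by
    have := Int.emod_add_mul_ediv m q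
    have h2 : ((m % q + q * (m / q) : ℤ) : ℂ) = (m : ℂ) := by rw [this]
    push_cast at h2
    linear_combination -h2
  rw [show ((((m : ZMod q)).val : ℕ) : ℂ) = ((m % q : ℤ) : ℂ) by exact_mod_cast hv, this]
  rw [show 2 * Real.pi * Complex.I * (((m % q : ℤ) : ℂ) + q * ((m / q : ℤ) : ℂ)) / q
      = 2 * Real.pi * Complex.I * ((m % q : ℤ) : ℂ) / q + ((m / q : ℤ) : ℂ) * (2 * Real.pi * Complex.I) by field_simp]
  rw [Complex.exp_add, Complex.exp_int_mul_two_pi_mul_I, mul_one]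

lemma ee_zero : ee q 0 = 1 := by
  unfold ee; simp

lemma ee_add (a b : ZMod q) : ee q (a + b) = ee q a * ee q b := by
  have ha : a = ((a.val : ℤ) : ZMod q) := by simp [ZMod.natCast_val]
  have hb : b = ((b.val : ℤ) : ZMod q) := by simp [ZMod.natCast_val]
  rw [ha, hb, ← Int.cast_add, ee_int, ee_int, ee_int, ← Complex.exp_add]
  congr 1
  push_cast
  ring

lemma ee_conj (k : ZMod q) : (starRingEnd ℂ) (ee q k) = ee q (-k) := by
  have ha : k = ((k.val : ℤ) : ZMod q) := by simp [ZMod.natCast_val, ZMod.cast_id]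
  have h2 : -k = (((-(k.val : ℤ)) : ℤ) : ZMod q) := by
    push_cast
    simp [ZMod.natCast_val, ZMod.cast_id]
  rw [h2, ee_int]
  conv_lhs => rw [ha, ee_int]
  rw [← Complex.exp_conj]
  congr 1
  have hq : (q : ℂ) ≠ 0 := Nat.cast_ne_zero.mpr (NeZero.ne q)
  rw [map_div₀]
  simp only [map_mul, Complex.conj_I, Complex.conj_ofReal, map_ofNat, map_natCast, map_intCast]
  push_cast
  ring

lemma ee_ne_one {c : ZMod q} (hc : c ≠ 0) : ee q c ≠ 1 := by
  intro h
  unfold ee at h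
  rw [Complex.exp_eq_one_iff] at h
  obtain ⟨m, hm⟩ := h
  have hq : (q : ℂ) ≠ 0 := Nat.cast_ne_zero.mpr (NeZero.ne q)
  have hpi : (2 * (Real.pi : ℂ) * Complex.I) ≠ 0 := by
    simp [Complex.I_ne_zero, Real.pi_ne_zero, Complex.ofReal_ne_zero]
  have hval : ((c.val : ℕ) : ℂ) = (m : ℂ) * q := by
    field_simp at hm
    linear_combination hm
  have hZ : (c.val : ℤ) = m * q := by exact_mod_cast hval
  have hlt : c.val < q := ZMod.val_lt c
  have hne : c.val ≠ 0 := fun h0 => hc ((ZMod.val_eq_zero c).mp h0)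
  have hdvd : (q : ℤ) ∣ (c.val : ℤ) := ⟨m, by linarith [hZ]⟩
  have := Int.le_of_dvd (by exact_mod_cast Nat.pos_of_ne_zero hne) hdvd
  omega

lemma sum_ee (c : ZMod q) : ∑ t : ZMod q, ee q (c * t) = if c = 0 then (q : ℂ) else 0 := by
  by_cases hc : c = 0
  · simp [hc, ee_zero, ZMod.card]
  · simp only [hc, if_false]
    have h1 : ∑ t : ZMod q, ee q (c * t) = ∑ t : ZMod q, ee q (c * (t + 1)) :=
      (Fintype.sum_equiv (Equiv.addRight (1 : ZMod q)) _ _ (fun t => rfl)).symm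
    have key : (∑ t : ZMod q, ee q (c * t)) = ee q c * ∑ t : ZMod q, ee q (c * t) := by
      rw [Finset.mul_sum, h1]
      apply Finset.sum_congr rfl
      intro t _
      rw [mul_add, mul_one, ee_add]
      ring
    have h3 : (1 - ee q c) * (∑ t : ZMod q, ee q (c * t)) = 0 := by linear_combination key
    rcases mul_eq_zero.mp h3 with h | h
    · exact absurd (by linear_combination -h : ee q c = 1) (ee_ne_one q hc)
    · exact h

lemma chi_eq (n : ℕ) (u x : Fin n → ZMod q) : chi q n u x = ee q (∑ i, u i * x i) := rfl

lemma ee_sum {ι : Type*} (s : Finset ι) (g : ι → ZMod q) :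
    ee q (∑ i ∈ s, g i) = ∏ i ∈ s, ee q (g i) := by
  classical
  induction s using Finset.cons_induction with
  | empty => simp [ee_zero]
  | cons i s hi ih => rw [Finset.sum_cons, Finset.prod_cons, ee_add, ih]

lemma chi_symm (n : ℕ) (u x : Fin n → ZMod q) : chi q n u x = chi q n x u := by
  rw [chi_eq, chi_eq]
  congr 1
  exact Finset.sum_congr rfl (fun i _ => mul_comm _ _)

lemma sum_chi_conj (n : ℕ) (u v : Fin n → ZMod q) :
    ∑ x : Fin n → ZMod q, chi q n u x * (starRingEnd ℂ) (chi q n v x)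
      = if u = v then (q : ℂ) ^ n else 0 := by
  have step : ∀ x : Fin n → ZMod q,
      chi q n u x * (starRingEnd ℂ) (chi q n v x) = ∏ i, ee q ((u i - v i) * x i) := by
    intro x
    rw [chi_eq, chi_eq, ee_conj, ← ee_add, ← ee_sum]
    congr 1
    rw [← Finset.sum_neg_distrib, ← Finset.sum_add_distrib]
    exact Finset.sum_congr rfl (fun i _ => by ring)
  simp only [step]
  rw [← Fintype.piFinset_univ,
    Finset.sum_prod_piFinset (univ : Finset (ZMod q)) (fun i t => ee q ((u i - v i) * t))]
  simp only [sum_ee]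
  by_cases huv : u = v
  · simp [huv]
  · simp only [huv, if_false]
    obtain ⟨i, hi⟩ := Function.ne_iff.mp huv
    apply Finset.prod_eq_zero (Finset.mem_univ i)
    simp [sub_eq_zero, hi]

lemma inv_formula (n : ℕ) (f : (Fin n → ZMod q) → ℂ) (x : Fin n → ZMod q) :
    ∑ u : Fin n → ZMod q, fhat q n f u * chi q n u x = f x := by
  have hq : (q : ℂ) ^ n ≠ 0 := pow_ne_zero _ (Nat.cast_ne_zero.mpr (NeZero.ne q))
  unfold fhat
  have : ∀ u : Fin n → ZMod q,
      ((1 / (q : ℂ) ^ n) * ∑ y, f y * (starRingEnd ℂ) (chi q n u y)) * chi q n u x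
      = (1 / (q : ℂ) ^ n) * ∑ y, f y * (chi q n x u * (starRingEnd ℂ) (chi q n y u)) := by
    intro u
    rw [mul_assoc, Finset.sum_mul]
    congr 1
    apply Finset.sum_congr rfl
    intro y _
    rw [chi_symm q n x u, chi_symm q n y u]
    ring
  simp only [this]
  rw [← Finset.mul_sum, Finset.sum_comm]
  have h2 : ∀ y : Fin n → ZMod q,
      (∑ u : Fin n → ZMod q, f y * (chi q n x u * (starRingEnd ℂ) (chi q n y u)))
      = f y * (if x = y then (q : ℂ) ^ n else 0) := by
    intro y
    rw [← Finset.mul_sum, sum_chi_conj]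
  simp only [h2]
  have h3 : ∀ y : Fin n → ZMod q,
      f y * (if x = y then (q : ℂ) ^ n else 0) = if x = y then f y * (q : ℂ) ^ n else 0 := by
    intro y; split <;> simp
  simp only [h3, Finset.sum_ite_eq, Finset.mem_univ, if_true]
  field_simp

lemma chi_single (n : ℕ) (i : Fin n) (c : ZMod q) (x : Fin n → ZMod q) :
    chi q n (Pi.single i c) x = ee q (c * x i) := by
  rw [chi_eq]
  congr 1
  rw [Finset.sum_eq_single i]
  · rw [Pi.single_eq_same]
  · intro m _ hm
    rw [Pi.single_eq_of_ne hm, zero_mul]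
  · intro h; exact absurd (Finset.mem_univ i) h

lemma support_single {n : ℕ} {u : Fin n → ZMod q} (h1 : hammingNorm u ≤ 1)
    {k : Fin n} (hk : u k ≠ 0) : ∀ m, m ≠ k → u m = 0 := by
  intro m hm
  by_contra hum
  have hsub : ({k, m} : Finset (Fin n)) ⊆ univ.filter (fun j => u j ≠ 0) := by
    intro a ha
    simp only [Finset.mem_insert, Finset.mem_singleton] at ha
    rcases ha with rfl | rfl <;> simp [hk, hum]
  have hcard : ({k, m} : Finset (Fin n)).card = 2 := by
    rw [Finset.card_insert_of_notMem (by simpa using (Ne.symm hm)), Finset.card_singleton]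
  have := Finset.card_le_card hsub
  rw [hcard] at this
  unfold hammingNorm at h1
  omega

lemma diff_formula (n : ℕ) (f : (Fin n → ZMod q) → ℂ)
    (hdeg : ∀ u : Fin n → ZMod q, 2 ≤ hammingNorm u → fhat q n f u = 0)
    (i : Fin n) (x y : Fin n → ZMod q) (hxy : ∀ j, j ≠ i → x j = y j) :
    f x - f y = ∑ c : ZMod q, fhat q n f (Pi.single i c) *
      (ee q (c * x i) - ee q (c * y i)) := by
  rw [← inv_formula q n f x, ← inv_formula q n f y, ← Finset.sum_sub_distrib]
  have hterm : ∀ u : Fin n → ZMod q,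
      fhat q n f u * chi q n u x - fhat q n f u * chi q n u y
        = fhat q n f u * (chi q n u x - chi q n u y) := fun u => by ring
  simp only [hterm]
  rw [show (univ : Finset (Fin n → ZMod q)).sum (fun u => fhat q n f u * (chi q n u x - chi q n u y))
      = ∑ u ∈ univ.image (fun c : ZMod q => (Pi.single i c : Fin n → ZMod q)),
          fhat q n f u * (chi q n u x - chi q n u y) from
    (Finset.sum_subset (Finset.subset_univ _) ?_).symm]
  · rw [Finset.sum_image (fun c _ d _ h => Pi.single_injective i h)]
    apply Finset.sum_congr rfl
    intro c _
    rw [chi_single, chi_single]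
  · intro u _ hu
    by_cases hdu : 2 ≤ hammingNorm u
    · rw [hdeg u hdu, zero_mul]
    · push_neg at hdu
      have hdu1 : hammingNorm u ≤ 1 := by omega
      have hk : ∃ k, k ≠ i ∧ u k ≠ 0 := by
        by_contra hc
        push_neg at hc
        apply hu
        rw [Finset.mem_image]
        refine ⟨u i, Finset.mem_univ _, ?_⟩
        funext m
        by_cases hm : m = i
        · subst hm; rw [Pi.single_eq_same]
        · rw [Pi.single_eq_of_ne hm, hc m hm]
      obtain ⟨k, hki, hk⟩ := hk
      have hsupp := support_single q hdu1 hk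
      have hchix : chi q n u x = ee q (u k * x k) := by
        rw [chi_eq]; congr 1
        rw [Finset.sum_eq_single k]
        · intro m _ hm; rw [hsupp m hm, zero_mul]
        · intro h; exact absurd (Finset.mem_univ k) h
      have hchiy : chi q n u y = ee q (u k * y k) := by
        rw [chi_eq]; congr 1
        rw [Finset.sum_eq_single k]
        · intro m _ hm; rw [hsupp m hm, zero_mul]
        · intro h; exact absurd (Finset.mem_univ k) h
      rw [hchix, hchiy, hxy k hki, sub_self, mul_zero]

end Aux

theorem stmt17 (q n : ℕ) [NeZero q] (hq : 2 ≤ q) (hn : 1 ≤ n)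
    (f : (Fin n → ZMod q) → ℂ) (hbool : ∀ x, f x = 1 ∨ f x = -1)
    (hdeg : ∀ u : Fin n → ZMod q, 2 ≤ hammingNorm u → fhat q n f u = 0) :
    (univ.filter (fun i : Fin n => Relevant f i)).card ≤ 1 := by
  rw [Finset.card_le_one]
  intro i hi j hj
  simp only [Finset.mem_filter] at hi hj
  obtain ⟨-, x, y, hxy, hfxy⟩ := hi
  obtain ⟨-, x', y', hxy', hfxy'⟩ := hj
  by_contra hij
  have keyi : ∀ w w' : Fin n → ZMod q, (∀ m, m ≠ i → w m = w' m) →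
      w i = x i → w' i = y i → f w - f w' = f x - f y := by
    intro w w' h h1 h2
    rw [diff_formula q n f hdeg i w w' h, diff_formula q n f hdeg i x y hxy, h1, h2]
  have keyj : ∀ w w' : Fin n → ZMod q, (∀ m, m ≠ j → w m = w' m) →
      w j = x' j → w' j = y' j → f w - f w' = f x' - f y' := by
    intro w w' h h1 h2
    rw [diff_formula q n f hdeg j w w' h, diff_formula q n f hdeg j x' y' hxy', h1, h2]
  set W : ZMod q → ZMod q → (Fin n → ZMod q) :=
    fun s t => Function.update (Function.update x i s) j t with hW
  have Wi : ∀ s t, W s t i = s := by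
    intro s t
    rw [hW]
    simp only []
    rw [Function.update_of_ne hij, Function.update_self]
  have Wj : ∀ s t, W s t j = t := by
    intro s t
    rw [hW]
    simp only []
    rw [Function.update_self]
  have agreei : ∀ s s' t, ∀ m, m ≠ i → W s t m = W s' t m := by
    intro s s' t m hm
    by_cases hmj : m = j
    · subst hmj; rw [Wj, Wj]
    · rw [hW]
      simp only []
      rw [Function.update_of_ne hmj, Function.update_of_ne hmj,
        Function.update_of_ne hm, Function.update_of_ne hm]
  have agreej : ∀ s t t', ∀ m, m ≠ j → W s t m = W s t' m := by
    intro s t t' m hm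
    rw [hW]
    simp only []
    rw [Function.update_of_ne hm, Function.update_of_ne hm]
  set p1 := f (W (x i) (x' j)) with hp1
  set p2 := f (W (y i) (x' j)) with hp2
  set p3 := f (W (x i) (y' j)) with hp3
  set p4 := f (W (y i) (y' j)) with hp4
  have E1 : p1 - p2 = f x - f y :=
    keyi _ _ (fun m hm => agreei _ _ _ m hm) (Wi _ _) (Wi _ _)
  have E2 : p3 - p4 = f x - f y :=
    keyi _ _ (fun m hm => agreei _ _ _ m hm) (Wi _ _) (Wi _ _)
  have E3 : p1 - p3 = f x' - f y' :=
    keyj _ _ (fun m hm => agreej _ _ _ m hm) (Wj _ _) (Wj _ _)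
  have E4 : p2 - p4 = f x' - f y' :=
    keyj _ _ (fun m hm => agreej _ _ _ m hm) (Wj _ _) (Wj _ _)
  have hD1 : f x - f y ≠ 0 := sub_ne_zero_of_ne hfxy
  have hD2 : f x' - f y' ≠ 0 := sub_ne_zero_of_ne hfxy'
  have pm : ∀ v w : ℂ, (v = 1 ∨ v = -1) → (w = 1 ∨ w = -1) → v - w ≠ 0 → w = -v := by
    rintro v w (rfl | rfl) (rfl | rfl) h <;> norm_num at *
  have h2 : p2 = -p1 := pm _ _ (hbool _) (hbool _) (E1 ▸ hD1)
  have h3 : p3 = -p1 := pm _ _ (hbool _) (hbool _) (E3 ▸ hD2)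
  have h4 : p4 = -p3 := pm _ _ (hbool _) (hbool _) (E2 ▸ hD1)
  have hcontr : p1 - p2 = p3 - p4 := by rw [E1, E2]
  rw [h2, h3, h4, h3] at hcontr
  have hp0 : p1 = 0 := by linear_combination hcontr / 4
  rcases hbool (W (x i) (x' j)) with h | h <;> rw [← hp1, hp0] at h <;> norm_num at h
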